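/- arXiv:1402.3684 — 4 statements merged into one kernel-verified Lean document; each statement's English description precedes it below -/
import Mathlib

section
/- Let K, K₀ ∈ 𝒦^{n*} and let r = d_H(K,K₀) be their Hausdorff distance. Then θ^t(K) ≤ (1+r)^{2n}·θ^t(K₀). -/
open Metric Set Pointwise MeasureTheory Filter ENNReal

/-- The density of the system of translates `{K + x : x ∈ X}`:
`limsup_{R → ∞} (∑_{x ∈ X} vol((K + x) ∩ R·Bⁿ)) / vol(R·Bⁿ)`. -/
noncomputable def transDensity (n : ℕ) (K X : Set (EuclideanSpace ℝ (Fin n))) : ℝ≥0∞ :=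
  Filter.limsup
    (fun R : ℝ =>
      (∑' x : X, volume (((x : EuclideanSpace ℝ (Fin n)) +ᵥ K) ∩ closedBall 0 R)) /
        volume (closedBall (0 : EuclideanSpace ℝ (Fin n)) R))
    Filter.atTop

/-- The translative covering density `θ^t(K)`: the infimum of the densities of `{K + x : x ∈ X}`
over all countable `X ⊆ ℝⁿ` whose translates of `K` cover `ℝⁿ`. -/
noncomputable def thetaT (n : ℕ) (K : Set (EuclideanSpace ℝ (Fin n))) : ℝ≥0∞ :=
  ⨅ (X : Set (EuclideanSpace ℝ (Fin n)))
    (_ : X.Countable ∧ ⋃ x ∈ X, x +ᵥ K = Set.univ), transDensity n K X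

lemma aux_subset_smul {n : ℕ} {A B : Set (EuclideanSpace ℝ (Fin n))} {r : ℝ} (hr : 0 ≤ r)
    (hBconv : Convex ℝ B) (hBcomp : IsCompact B) (hB1 : closedBall 0 1 ⊆ B)
    (hfin : EMetric.hausdorffEdist A B ≠ ⊤) (hd : hausdorffDist A B ≤ r) :
    A ⊆ (1 + r) • B := by
  have hBne : B.Nonempty := ⟨0, hB1 (mem_closedBall_self zero_le_one)⟩
  intro x hx
  have h1 : infDist x B ≤ r :=
    le_trans (infDist_le_hausdorffDist_of_mem hx hfin) hd
  obtain ⟨y, hyB, hxy⟩ := hBcomp.exists_infDist_eq_dist hBne x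
  have hdxy : dist x y ≤ r := by rw [← hxy]; exact h1
  have hxyB : x - y ∈ r • B := by
    rcases eq_or_lt_of_le hr with h0 | h0
    · have hxy0 : x = y := by
        have : dist x y ≤ 0 := by linarith [h0]
        have := le_antisymm this dist_nonneg
        exact eq_of_dist_eq_zero this
      refine ⟨0, hB1 (mem_closedBall_self zero_le_one), ?_⟩
      simp [hxy0]
    · refine ⟨r⁻¹ • (x - y), hB1 ?_, ?_⟩
      · rw [mem_closedBall_zero_iff, norm_smul, norm_inv, Real.norm_of_nonneg hr]
        rw [← dist_eq_norm]
        calc r⁻¹ * dist x y ≤ r⁻¹ * r := by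
              exact mul_le_mul_of_nonneg_left hdxy (inv_nonneg.2 hr)
          _ = 1 := inv_mul_cancel₀ h0.ne'
      · show r • (r⁻¹ • (x - y)) = x - y
        rw [smul_smul, mul_inv_cancel₀ h0.ne', one_smul]
  have heq : (1 + r) • B = B + r • B := by
    rw [hBconv.add_smul zero_le_one hr, one_smul]
  rw [heq]
  exact ⟨y, hyB, x - y, hxyB, by module⟩

lemma aux_div_le {a b d c : ℝ≥0∞} (hb0 : b ≠ 0) (hbt : b ≠ ⊤) (hd0 : d ≠ 0) (hdt : d ≠ ⊤)
    (h : b ≤ c * d) : a / d ≤ c * (a / b) := by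
  have hinv : d⁻¹ ≤ c * b⁻¹ := by
    calc d⁻¹ = b⁻¹ * b * d⁻¹ := by rw [ENNReal.inv_mul_cancel hb0 hbt, one_mul]
      _ = b⁻¹ * (b * d⁻¹) := by rw [mul_assoc]
      _ ≤ b⁻¹ * (c * d * d⁻¹) := mul_le_mul_right (mul_le_mul_left h _) _
      _ = b⁻¹ * (c * (d * d⁻¹)) := by rw [mul_assoc]
      _ = b⁻¹ * c := by rw [ENNReal.mul_inv_cancel hd0 hdt, mul_one]
      _ = c * b⁻¹ := mul_comm _ _
  calc a / d = a * d⁻¹ := div_eq_mul_inv a d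
    _ ≤ a * (c * b⁻¹) := mul_le_mul_right hinv a
    _ = c * (a * b⁻¹) := by rw [mul_left_comm]
    _ = c * (a / b) := by rw [div_eq_mul_inv]

/-- Let `K, K₀ ∈ 𝒦^{n*}` and let `r = d_H(K, K₀)` be their Hausdorff distance.
Then `θ^t(K) ≤ (1+r)^{2n} · θ^t(K₀)`. -/
theorem stmt_2 (n : ℕ) (hn : 1 ≤ n) (K K₀ : Set (EuclideanSpace ℝ (Fin n)))
    (hKcomp : IsCompact K) (hKconv : Convex ℝ K) (hKint : (interior K).Nonempty)
    (hK₀comp : IsCompact K₀) (hK₀conv : Convex ℝ K₀) (hK₀int : (interior K₀).Nonempty)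
    (hKl : closedBall (0 : EuclideanSpace ℝ (Fin n)) 1 ⊆ K) (hKu : K ⊆ closedBall 0 n)
    (hK₀l : closedBall (0 : EuclideanSpace ℝ (Fin n)) 1 ⊆ K₀) (hK₀u : K₀ ⊆ closedBall 0 n)
    (r : ℝ) (hr : r = hausdorffDist K K₀) :
    thetaT n K ≤ ENNReal.ofReal ((1 + r) ^ (2 * n)) * thetaT n K₀ := by
  have hr0 : 0 ≤ r := hr ▸ hausdorffDist_nonneg
  have h1r : (0:ℝ) < 1 + r := by linarith
  set cc : ℝ := (1 + r)⁻¹ with hcc_def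
  have hccne : cc ≠ 0 := inv_ne_zero h1r.ne'
  have hKne : K.Nonempty := ⟨0, hKl (mem_closedBall_self zero_le_one)⟩
  have hK₀ne : K₀.Nonempty := ⟨0, hK₀l (mem_closedBall_self zero_le_one)⟩
  have hfin : EMetric.hausdorffEdist K K₀ ≠ ⊤ :=
    hausdorffEdist_ne_top_of_nonempty_of_bounded hKne hK₀ne hKcomp.isBounded hK₀comp.isBounded
  have hKK₀ : K ⊆ (1 + r) • K₀ :=
    aux_subset_smul hr0 hK₀conv hK₀comp hK₀l hfin (le_of_eq hr.symm)
  have hK₀K : K₀ ⊆ (1 + r) • K := by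
    refine aux_subset_smul hr0 hKconv hKcomp hKl ?_ ?_
    · rw [EMetric.hausdorffEdist, hausdorffEDist_comm]; exact hfin
    · rw [hausdorffDist_comm]; exact le_of_eq hr.symm
  set C0 : ℝ≥0∞ := ENNReal.ofReal ((1 + r) ^ (2 * n)) with hC0_def
  have hC0ne0 : C0 ≠ 0 := (ENNReal.ofReal_pos.2 (pow_pos h1r _)).ne'
  have hC0net : C0 ≠ ⊤ := ENNReal.ofReal_ne_top
  -- main step: for any admissible X₀ for K₀
  have main : ∀ X₀ : Set (EuclideanSpace ℝ (Fin n)), X₀.Countable → (⋃ x ∈ X₀, x +ᵥ K₀ = Set.univ) →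
      thetaT n K ≤ C0 * transDensity n K₀ X₀ := by
    intro X₀ hcnt hcov
    set D := transDensity n K₀ X₀ with hD_def
    set X : Set (EuclideanSpace ℝ (Fin n)) := (fun y => cc • y) '' X₀ with hX_def
    have hinj : Function.Injective (fun y : EuclideanSpace ℝ (Fin n) => cc • y) := smul_right_injective (EuclideanSpace ℝ (Fin n)) hccne
    have hXcnt : X.Countable := hcnt.image _
    have hXcov : ⋃ x ∈ X, x +ᵥ K = Set.univ := by
      apply eq_univ_of_forall
      intro y
      have hy : (1 + r) • y ∈ ⋃ x₀ ∈ X₀, x₀ +ᵥ K₀ := by rw [hcov]; exact mem_univ _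
      rw [mem_iUnion₂] at hy
      obtain ⟨x₀, hx₀, hy2⟩ := hy
      obtain ⟨k₀, hk₀, hsum⟩ := mem_vadd_set.mp hy2
      obtain ⟨k, hkK, hk₀k⟩ := hK₀K hk₀
      apply mem_iUnion₂.2
      refine ⟨cc • x₀, mem_image_of_mem _ hx₀, ?_⟩
      rw [mem_vadd_set]
      refine ⟨k, hkK, ?_⟩
      have hk₀k' : (1 + r) • k = k₀ := hk₀k
      have hsum' : x₀ + (1 + r) • k = (1 + r) • y := by
        rw [hk₀k'] ; exact hsum
      show cc • x₀ + k = y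
      calc cc • x₀ + k = cc • (x₀ + (1 + r) • k) := by
            rw [smul_add, smul_smul, inv_mul_cancel₀ h1r.ne', one_smul]
        _ = cc • ((1 + r) • y) := by rw [hsum']
        _ = y := by rw [smul_smul, inv_mul_cancel₀ h1r.ne', one_smul]
    have hthK : thetaT n K ≤ transDensity n K X := iInf₂_le X ⟨hXcnt, hXcov⟩
    -- epsilon-level bound
    have hε : ∀ ε : ℝ, 0 < ε →
        transDensity n K X ≤ ENNReal.ofReal ((1 + r) ^ n * ((1 + r) + ε) ^ n) * D := by
      intro ε hε0
      set c' : ℝ := (1 + r) * n + n with hc'_def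
      have hc'0 : 0 ≤ c' := by positivity
      set ρf : ℝ → ℝ := fun R => (1 + r) * R + c' with hρf_def
      set C1 : ℝ≥0∞ := ENNReal.ofReal ((1 + r) ^ n) with hC1_def
      set C2 : ℝ≥0∞ := ENNReal.ofReal (((1 + r) + ε) ^ n) with hC2_def
      set g : ℝ → ℝ≥0∞ :=
        fun ρ' => ∑' x : X₀, volume (((x : EuclideanSpace ℝ (Fin n)) +ᵥ K₀) ∩ closedBall 0 ρ') with hg_def
      set G : ℝ → ℝ≥0∞ := fun ρ' => g ρ' / volume (closedBall (0 : EuclideanSpace ℝ (Fin n)) ρ') with hG_def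
      have hDG : D = Filter.limsup G Filter.atTop := rfl
      -- pointwise bound
      have step1 : ∀ (R : ℝ) (x₀ : EuclideanSpace ℝ (Fin n)), x₀ ∈ X₀ →
          volume ((cc • x₀ +ᵥ K) ∩ closedBall 0 R) ≤
            C1 * volume ((x₀ +ᵥ K₀) ∩ closedBall 0 (ρf R)) := by
        intro R x₀ _
        rcases ((cc • x₀ +ᵥ K) ∩ closedBall 0 R).eq_empty_or_nonempty with he | ⟨z, hz1, hz2⟩
        · rw [he]; simp
        · obtain ⟨k, hkK, hkz⟩ := mem_vadd_set.mp hz1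
          have hkn : ‖k‖ ≤ (n : ℝ) := mem_closedBall_zero_iff.1 (hKu hkK)
          have hzR : ‖z‖ ≤ R := mem_closedBall_zero_iff.1 hz2
          have hcx : ‖cc • x₀‖ ≤ R + n := by
            have : cc • x₀ = z - k := eq_sub_of_add_eq hkz
            rw [this]
            calc ‖z - k‖ ≤ ‖z‖ + ‖k‖ := norm_sub_le _ _
              _ ≤ R + n := add_le_add hzR hkn
          have hx₀n : ‖x₀‖ ≤ (1 + r) * (R + n) := by
            have hEq : x₀ = (1 + r) • (cc • x₀) := by
              rw [smul_smul, mul_inv_cancel₀ h1r.ne', one_smul]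
            rw [hEq, norm_smul, Real.norm_of_nonneg h1r.le]
            exact mul_le_mul_of_nonneg_left hcx h1r.le
          have hsub : x₀ +ᵥ K₀ ⊆ closedBall 0 (ρf R) := by
            intro y hy
            obtain ⟨k₀, hk₀, hk₀y⟩ := mem_vadd_set.mp hy
            have hk₀n : ‖k₀‖ ≤ (n : ℝ) := mem_closedBall_zero_iff.1 (hK₀u hk₀)
            rw [mem_closedBall_zero_iff, ← hk₀y]
            calc ‖x₀ + k₀‖ ≤ ‖x₀‖ + ‖k₀‖ := norm_add_le _ _
              _ ≤ (1 + r) * (R + n) + n := add_le_add hx₀n hk₀n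
              _ = ρf R := by simp only [hρf_def, hc'_def]; ring
          calc volume ((cc • x₀ +ᵥ K) ∩ closedBall 0 R)
              ≤ volume (cc • x₀ +ᵥ K) := measure_mono inter_subset_left
            _ = volume K := measure_vadd volume _ _
            _ ≤ volume ((1 + r) • K₀) := measure_mono hKK₀
            _ = C1 * volume K₀ := by
                rw [Measure.addHaar_smul_of_nonneg volume h1r.le K₀, finrank_euclideanSpace_fin]
            _ = C1 * volume (x₀ +ᵥ K₀) := by rw [measure_vadd]
            _ = C1 * volume ((x₀ +ᵥ K₀) ∩ closedBall 0 (ρf R)) := by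
                rw [inter_eq_self_of_subset_left hsub]
      -- reindexing
      have hre : ∀ R : ℝ,
          (∑' x : X, volume (((x : EuclideanSpace ℝ (Fin n)) +ᵥ K) ∩ closedBall 0 R)) =
            ∑' x₀ : X₀, volume ((cc • (x₀ : EuclideanSpace ℝ (Fin n)) +ᵥ K) ∩ closedBall 0 R) := by
        intro R
        rw [hX_def, ← Equiv.tsum_eq (Equiv.Set.image _ X₀ hinj)
          (fun x => volume (((x : EuclideanSpace ℝ (Fin n)) +ᵥ K) ∩ closedBall 0 R))]
        rfl
      have step2 : ∀ R : ℝ,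
          (∑' x : X, volume (((x : EuclideanSpace ℝ (Fin n)) +ᵥ K) ∩ closedBall 0 R)) ≤ C1 * g (ρf R) := by
        intro R
        rw [hre R, hg_def, ← ENNReal.tsum_mul_left]
        exact ENNReal.tsum_le_tsum fun x₀ => step1 R x₀ x₀.2
      -- eventual bound
      have step3 : ∀ R : ℝ, max 1 (c' / ε) ≤ R →
          (∑' x : X, volume (((x : EuclideanSpace ℝ (Fin n)) +ᵥ K) ∩ closedBall 0 R)) /
              volume (closedBall (0 : EuclideanSpace ℝ (Fin n)) R) ≤ C1 * C2 * G (ρf R) := by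
        intro R hR
        have hR1 : (1:ℝ) ≤ R := le_trans (le_max_left _ _) hR
        have hR0 : (0:ℝ) < R := lt_of_lt_of_le one_pos hR1
        have hRε : c' ≤ ε * R := by
          have := le_trans (le_max_right 1 (c' / ε)) hR
          rw [div_le_iff₀ hε0] at this
          linarith
        have hρpos : 0 < ρf R := by
          have : 0 < (1 + r) * R := mul_pos h1r hR0
          simp only [hρf_def]; linarith
        set vR := volume (closedBall (0 : EuclideanSpace ℝ (Fin n)) R) with hvR_def
        set vρ := volume (closedBall (0 : EuclideanSpace ℝ (Fin n)) (ρf R)) with hvρ_def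
        have hvR0 : vR ≠ 0 := (measure_closedBall_pos volume 0 hR0).ne'
        have hvRt : vR ≠ ⊤ := measure_closedBall_lt_top.ne
        have hvρ0 : vρ ≠ 0 := (measure_closedBall_pos volume 0 hρpos).ne'
        have hvρt : vρ ≠ ⊤ := measure_closedBall_lt_top.ne
        have hvρ_le : vρ ≤ C2 * vR := by
          have hρle : ρf R ≤ ((1 + r) + ε) * R := by
            simp only [hρf_def]; nlinarith
          calc vρ ≤ volume (closedBall (0 : EuclideanSpace ℝ (Fin n)) (((1 + r) + ε) * R)) :=
                measure_mono (closedBall_subset_closedBall hρle)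
            _ = ENNReal.ofReal ((((1 + r) + ε) * R) ^ n) * volume (closedBall (0 : EuclideanSpace ℝ (Fin n)) 1) := by
                rw [Measure.addHaar_closedBall' volume 0 (by positivity), finrank_euclideanSpace_fin]
            _ = C2 * (ENNReal.ofReal (R ^ n) * volume (closedBall (0 : EuclideanSpace ℝ (Fin n)) 1)) := by
                rw [mul_pow, ENNReal.ofReal_mul (by positivity), hC2_def, mul_assoc]
            _ = C2 * vR := by
                rw [hvR_def, Measure.addHaar_closedBall' volume 0 hR0.le,
                  finrank_euclideanSpace_fin]
        calc (∑' x : X, volume (((x : EuclideanSpace ℝ (Fin n)) +ᵥ K) ∩ closedBall 0 R)) / vR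
            ≤ (C1 * g (ρf R)) / vR := ENNReal.div_le_div_right (step2 R) vR
          _ = C1 * (g (ρf R) / vR) := by rw [mul_div_assoc]
          _ ≤ C1 * (C2 * (g (ρf R) / vρ)) :=
              mul_le_mul_right (aux_div_le hvρ0 hvρt hvR0 hvRt hvρ_le) C1
          _ = C1 * C2 * G (ρf R) := by rw [hG_def, ← mul_assoc]
      -- limsup
      have hρtend : Filter.Tendsto ρf Filter.atTop Filter.atTop := by
        apply Filter.tendsto_atTop_add_const_right
        exact Filter.Tendsto.const_mul_atTop h1r Filter.tendsto_id
      have hC12t : C1 * C2 ≠ ⊤ := ENNReal.mul_ne_top ENNReal.ofReal_ne_top ENNReal.ofReal_ne_top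
      calc transDensity n K X
          ≤ Filter.limsup (fun R => C1 * C2 * G (ρf R)) Filter.atTop := by
            exact Filter.limsup_le_limsup (Filter.eventually_atTop.2 ⟨max 1 (c' / ε), step3⟩)
        _ = C1 * C2 * Filter.limsup (G ∘ ρf) Filter.atTop :=
            ENNReal.limsup_const_mul_of_ne_top hC12t
        _ ≤ C1 * C2 * Filter.limsup G Filter.atTop := by
            apply mul_le_mul_right
            rw [Filter.limsup_comp]
            exact Filter.limsup_le_limsup_of_le hρtend
        _ = ENNReal.ofReal ((1 + r) ^ n * ((1 + r) + ε) ^ n) * D := by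
            rw [hDG, ENNReal.ofReal_mul (by positivity)]
      -- end hε
    have htend : Filter.Tendsto
        (fun ε : ℝ => ENNReal.ofReal ((1 + r) ^ n * ((1 + r) + ε) ^ n) * D)
        (nhdsWithin 0 (Set.Ioi 0)) (nhds (C0 * D)) := by
      have h2n : ((1 + r) : ℝ) ^ (2 * n) = (1 + r) ^ n * (1 + r) ^ n := by
        rw [two_mul, pow_add]
      have hcont : Filter.Tendsto (fun ε : ℝ => (1 + r) ^ n * ((1 + r) + ε) ^ n)
          (nhds 0) (nhds ((1 + r) ^ n * ((1 + r) + 0) ^ n)) := by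
        apply Filter.Tendsto.const_mul
        exact ((continuous_pow n).comp (continuous_const.add continuous_id)).tendsto 0
      rw [add_zero] at hcont
      have hof : Filter.Tendsto (fun ε : ℝ => ENNReal.ofReal ((1 + r) ^ n * ((1 + r) + ε) ^ n))
          (nhdsWithin 0 (Set.Ioi 0)) (nhds (ENNReal.ofReal ((1 + r) ^ n * (1 + r) ^ n))) :=
        (ENNReal.continuous_ofReal.tendsto _).comp (hcont.mono_left nhdsWithin_le_nhds)
      have hmul : Filter.Tendsto
          (fun ε : ℝ => ENNReal.ofReal ((1 + r) ^ n * ((1 + r) + ε) ^ n) * D)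
          (nhdsWithin 0 (Set.Ioi 0)) (nhds (ENNReal.ofReal ((1 + r) ^ n * (1 + r) ^ n) * D)) :=
        ENNReal.Tendsto.mul_const hof
          (Or.inl (ENNReal.ofReal_pos.2 (by positivity)).ne')
      rw [hC0_def, h2n]
      exact hmul
    apply ge_of_tendsto htend
    filter_upwards [self_mem_nhdsWithin] with ε hε0
    exact le_trans hthK (hε ε hε0)
  -- final assembly
  by_cases hT : thetaT n K₀ = ⊤
  · rw [hT, ENNReal.mul_top hC0ne0]
    exact le_top
  · have hδ : ∀ δ : ℝ, 0 < δ →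
        thetaT n K ≤ C0 * (thetaT n K₀ + ENNReal.ofReal δ) := by
      intro δ hδ0
      have hlt : thetaT n K₀ < thetaT n K₀ + ENNReal.ofReal δ :=
        ENNReal.lt_add_right hT (ENNReal.ofReal_pos.2 hδ0).ne'
      obtain ⟨X₀, hX₀lt⟩ := iInf_lt_iff.mp
        (show (⨅ (X : Set (EuclideanSpace ℝ (Fin n)))
            (_ : X.Countable ∧ ⋃ x ∈ X, x +ᵥ K₀ = Set.univ), transDensity n K₀ X) <
            thetaT n K₀ + ENNReal.ofReal δ from hlt)
      obtain ⟨hP, hDlt⟩ := iInf_lt_iff.mp hX₀lt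
      exact (main X₀ hP.1 hP.2).trans (mul_le_mul_right hDlt.le _)
    have htend : Filter.Tendsto (fun δ : ℝ => C0 * (thetaT n K₀ + ENNReal.ofReal δ))
        (nhdsWithin 0 (Set.Ioi 0)) (nhds (C0 * thetaT n K₀)) := by
      have h1 : Filter.Tendsto (fun δ : ℝ => ENNReal.ofReal δ)
          (nhdsWithin 0 (Set.Ioi 0)) (nhds 0) := by
        have := (ENNReal.continuous_ofReal.tendsto 0).mono_left
          (nhdsWithin_le_nhds : nhdsWithin (0:ℝ) (Set.Ioi 0) ≤ nhds 0)
        simpa using this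
      have h2 : Filter.Tendsto (fun δ : ℝ => thetaT n K₀ + ENNReal.ofReal δ)
          (nhdsWithin 0 (Set.Ioi 0)) (nhds (thetaT n K₀ + 0)) :=
        Filter.Tendsto.const_add _ h1
      rw [add_zero] at h2
      exact ENNReal.Tendsto.const_mul h2 (Or.inr hC0net)
    apply ge_of_tendsto htend
    filter_upwards [self_mem_nhdsWithin] with δ hδ0
    exact hδ δ hδ0
end

section
/- There exist positive constants c and d, depending only on the dimension n, such that |δ^t(K₁) − δ^t(K₂)| ≤ c·d_H(K₁,K₂) holds for every pair K₁, K₂ ∈ 𝒦^{n*} with d_H(K₁,K₂) ≤ d. -/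
open Metric Set Pointwise MeasureTheory Filter ENNReal

/-- The translative packing density `δ^t(K)`: the supremum of the densities of `{K + x : x ∈ X}`
over all countable `X ⊆ ℝⁿ` such that the translates `K + x` (`x ∈ X`) have pairwise disjoint
interiors. -/
noncomputable def deltaT (n : ℕ) (K : Set (EuclideanSpace ℝ (Fin n))) : ℝ≥0∞ :=
  ⨆ (X : Set (EuclideanSpace ℝ (Fin n)))
    (_ : X.Countable ∧
      X.Pairwise fun x y => interior (x +ᵥ K) ∩ interior (y +ᵥ K) = ∅),
    transDensity n K X

/-! ### Auxiliary elementary lemmas -/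

lemma aux_pow_le (n : ℕ) {ε : ℝ} (h0 : 0 ≤ ε) (h1 : ε ≤ 1) :
    (1+ε)^n ≤ 1 + (2^n - 1)*ε := by
  induction n with
  | zero => simp
  | succ k ih =>
    have h2 : (0:ℝ) ≤ 2^k - 1 := by
      have : (1:ℝ) ≤ 2^k := one_le_pow₀ (by norm_num)
      linarith
    have e2 : (2:ℝ)^(k+1) = 2 * 2^k := by ring
    calc (1+ε)^(k+1) = (1+ε)^k * (1+ε) := by ring
    _ ≤ (1 + (2^k-1)*ε) * (1+ε) := by
        apply mul_le_mul_of_nonneg_right ih (by linarith)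
    _ ≤ 1 + (2^(k+1) - 1)*ε := by
        rw [e2]; nlinarith [mul_nonneg h2 (mul_nonneg h0 h0), sq_nonneg ε,
          mul_le_mul_of_nonneg_left h1 (mul_nonneg h2 h0)]

lemma aux_pow_sub (n : ℕ) {ε : ℝ} (h0 : 0 ≤ ε) (h1 : ε ≤ 1) :
    (1+ε)^n - ((1+ε)^n)⁻¹ ≤ 2^(n+1) * ε := by
  set P := (1+ε)^n with hP
  have hP1 : 1 ≤ P := one_le_pow₀ (by linarith)
  have hPpos : 0 < P := by linarith
  have hinv : P * P⁻¹ = 1 := mul_inv_cancel₀ hPpos.ne'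
  have h2 : P - P⁻¹ ≤ 2*(P-1) := by nlinarith [inv_nonneg.mpr hPpos.le]
  have h3 : P ≤ 1 + (2^n - 1)*ε := aux_pow_le n h0 h1
  have e2 : (2:ℝ)^(n+1) = 2 * 2^n := by ring
  have hn2 : (0:ℝ) < 2^n := by positivity
  calc P - P⁻¹ ≤ 2*(P-1) := h2
  _ ≤ 2*((2^n-1)*ε) := by linarith
  _ ≤ 2^(n+1)*ε := by rw [e2]; nlinarith

lemma aux_map_div {m : ℝ} (hm : 0 < m) : Filter.map (fun R : ℝ => R / m) atTop = atTop := by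
  apply le_antisymm
  · exact (tendsto_id.atTop_div_const hm)
  · have h1 : Tendsto (fun R : ℝ => R * m) atTop atTop := tendsto_id.atTop_mul_const hm
    have h2 : atTop = Filter.map (fun R : ℝ => R / m) (Filter.map (fun R : ℝ => R * m) atTop) := by
      rw [Filter.map_map]
      have : ((fun R : ℝ => R / m) ∘ fun R : ℝ => R * m) = id := by
        funext x; simp [Function.comp, mul_div_cancel_right₀ _ hm.ne']
      rw [this, Filter.map_id]
    conv_lhs => rw [h2]
    exact Filter.map_mono h1

lemma aux_limsup_comp {m : ℝ} (hm : 0 < m) (u : ℝ → ℝ≥0∞) :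
    Filter.limsup (fun R => u (R / m)) atTop = Filter.limsup u atTop := by
  conv_rhs => rw [← aux_map_div hm]
  rfl

lemma aux_limsup_add_const (u : ℝ → ℝ≥0∞) (C : ℝ≥0∞) :
    Filter.limsup (fun R => u R + C) atTop ≤ Filter.limsup u atTop + C := by
  apply ENNReal.le_of_forall_pos_le_add
  intro ε hε hlt
  have hL : Filter.limsup u atTop ≠ ⊤ := by
    intro h; rw [h] at hlt; simp at hlt
  have hlt2 : Filter.limsup u atTop < Filter.limsup u atTop + ε :=
    ENNReal.lt_add_right hL (by exact_mod_cast hε.ne')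
  have hev := Filter.eventually_lt_of_limsup_lt hlt2
  have h3 : Filter.limsup (fun R => u R + C) atTop ≤ (Filter.limsup u atTop + ε) + C :=
    Filter.limsup_le_of_le (by isBoundedDefault)
      (hev.mono fun x hx => add_le_add hx.le le_rfl)
  calc Filter.limsup (fun R => u R + C) atTop ≤ (Filter.limsup u atTop + ε) + C := h3
  _ = Filter.limsup u atTop + C + ε := by ring

/-! ### Geometric lemmas -/

section Geom
variable {E : Type*} [NormedAddCommGroup E] [NormedSpace ℝ E]

lemma aux_subset_smul_s14 {K K' : Set E} {ε : ℝ} (hε : 0 ≤ ε)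
    (hK'conv : Convex ℝ K') (hKcpt : IsCompact K) (hK'cpt : IsCompact K')
    (hKne : K.Nonempty) (hK'ne : K'.Nonempty)
    (hB : closedBall (0:E) 1 ⊆ K')
    (hd : hausdorffDist K K' ≤ ε) : K ⊆ (1+ε) • K' := by
  have hne : EMetric.hausdorffEdist K K' ≠ ⊤ :=
    hausdorffEdist_ne_top_of_nonempty_of_bounded hKne hK'ne hKcpt.isBounded hK'cpt.isBounded
  intro y hy
  have h1 : infDist y K' ≤ ε := (infDist_le_hausdorffDist_of_mem hy hne).trans hd
  obtain ⟨z, hz, hdz⟩ := hK'cpt.exists_infDist_eq_dist hK'ne y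
  have hdist : dist y z ≤ ε := by rw [← hdz]; exact h1
  have hmem : y - z ∈ ε • K' := by
    have hball : y - z ∈ closedBall (0:E) ε := by
      rw [mem_closedBall, dist_zero_right, ← dist_eq_norm]; exact hdist
    rcases eq_or_lt_of_le hε with h0 | h0
    · rw [← h0] at hball
      rw [mem_closedBall, dist_zero_right, norm_le_zero_iff] at hball
      rw [hball, ← h0]
      obtain ⟨w, hw⟩ := hK'ne
      exact ⟨w, hw, by simp⟩
    · have h2 : ε • closedBall (0:E) 1 = closedBall (0:E) ε := by
        rw [_root_.smul_closedBall ε (0:E) zero_le_one, smul_zero, mul_one,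
          Real.norm_of_nonneg hε]
      rw [← h2] at hball
      exact smul_set_mono hB hball
  have hy2 : z + (y - z) ∈ K' + ε • K' := add_mem_add hz hmem
  have he : z + (y - z) = y := by abel
  rw [he] at hy2
  rw [Convex.add_smul hK'conv zero_le_one hε, one_smul]
  exact hy2

end Geom

section Main
variable {n : ℕ}
local notation "E" => EuclideanSpace ℝ (Fin n)

lemma aux_vol_smul {m : ℝ} (hm : 0 ≤ m) (S : Set E) :
    volume (m • S) = ENNReal.ofReal (m ^ n) * volume S := by
  rw [MeasureTheory.Measure.addHaar_smul, finrank_euclideanSpace_fin,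
    abs_of_nonneg (pow_nonneg hm n)]

lemma aux_smul_vadd (m : ℝ) (x : E) (K : Set E) :
    m • (x +ᵥ K) = (m • x) +ᵥ (m • K) := by
  ext y
  simp only [Set.mem_smul_set, Set.mem_vadd_set]
  constructor
  · rintro ⟨z, ⟨k, hk, rfl⟩, rfl⟩
    exact ⟨m • k, ⟨k, hk, rfl⟩, by rw [vadd_eq_add, vadd_eq_add, smul_add]⟩
  · rintro ⟨z, ⟨k, hk, rfl⟩, rfl⟩
    exact ⟨x + k, ⟨k, hk, rfl⟩, by rw [vadd_eq_add, smul_add]⟩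

lemma aux_smul_cb {m R : ℝ} (hm : 0 < m) (hR : 0 ≤ R) :
    m • closedBall (0:E) (R / m) = closedBall (0:E) R := by
  rw [_root_.smul_closedBall m (0:E) (div_nonneg hR hm.le), smul_zero,
    Real.norm_of_nonneg hm.le, mul_div_cancel₀ _ hm.ne']

set_option maxHeartbeats 1000000 in
lemma aux_scale (hn : 1 ≤ n) {m : ℝ} (hm : 1 ≤ m) (K X : Set E) :
    transDensity n (m • K) (m • X) = transDensity n K X := by
  have hm0 : (0:ℝ) < m := lt_of_lt_of_le one_pos hm
  have hinj : Function.Injective (fun x : E => m • x) :=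
    smul_right_injective _ hm0.ne'
  have hMn0 : ENNReal.ofReal (m ^ n) ≠ 0 := by
    rw [Ne, ENNReal.ofReal_eq_zero, not_le]; positivity
  have hMnt : ENNReal.ofReal (m ^ n) ≠ ⊤ := ENNReal.ofReal_ne_top
  have hev : (fun R : ℝ =>
      (∑' x : ↥(m • X), volume (((x : E) +ᵥ (m • K)) ∩ closedBall 0 R)) /
        volume (closedBall (0:E) R)) =ᶠ[atTop]
      (fun R : ℝ =>
      (∑' x : X, volume (((x : E) +ᵥ K) ∩ closedBall 0 (R / m))) /
        volume (closedBall (0:E) (R / m))) := by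
    filter_upwards [eventually_ge_atTop (0:ℝ)] with R hR
    have hX : m • X = (fun x : E => m • x) '' X := rfl
    have hnum : (∑' x : ↥(m • X), volume (((x : E) +ᵥ (m • K)) ∩ closedBall 0 R))
        = ENNReal.ofReal (m ^ n) *
          ∑' x : X, volume (((x : E) +ᵥ K) ∩ closedBall 0 (R / m)) := by
      rw [← ENNReal.tsum_mul_left]
      rw [hX,
        ← (Equiv.Set.image (fun x : E => m • x) X hinj).tsum_eq
          (fun x => volume (((x : E) +ᵥ (m • K)) ∩ closedBall 0 R))]
      apply tsum_congr
      intro x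
      have hco : ((Equiv.Set.image (fun x : E => m • x) X hinj x :
          ↥((fun x : E => m • x) '' X)) : E) = m • (x : E) := rfl
      rw [hco, ← aux_smul_vadd, ← aux_smul_cb hm0 hR, ← smul_set_inter₀ hm0.ne',
        aux_vol_smul hm0.le]
    rw [hnum, ← aux_smul_cb hm0 hR, aux_vol_smul hm0.le,
      ENNReal.mul_div_mul_left _ _ hMn0 hMnt]
  unfold transDensity
  rw [Filter.limsup_congr hev]
  exact aux_limsup_comp hm0
    (fun R => (∑' x : X, volume (((x : E) +ᵥ K) ∩ closedBall 0 R)) /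
      volume (closedBall (0:E) R))

lemma aux_compare (hn : 1 ≤ n) (L K' X' : Set E)
    (hX'c : X'.Countable)
    (hpack : X'.Pairwise fun x y => interior (x +ᵥ L) ∩ interior (y +ᵥ L) = ∅)
    (hK'L : K' ⊆ L) (hBK' : closedBall (0:E) 1 ⊆ K')
    (hL2n : L ⊆ closedBall (0:E) (2*n)) :
    transDensity n L X' ≤ transDensity n K' X' +
      (volume (L \ K') / volume (ball (0:E) 1)) * ENNReal.ofReal (2^n) := by
  haveI : Nontrivial E := Module.nontrivial_of_finrank_pos (R := ℝ)
    (by rw [finrank_euclideanSpace_fin]; omega)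
  haveI := hX'c.to_subtype
  set v := volume (ball (0:E) 1) with hv
  have hv0 : v ≠ 0 := (measure_ball_pos volume 0 one_pos).ne'
  have hvt : v ≠ ⊤ := measure_ball_lt_top.ne
  set w := volume (L \ K') with hw
  set C := (w / v) * ENNReal.ofReal ((2:ℝ)^n) with hC
  have hball_sub : ∀ x : E, ball x 1 ⊆ interior (x +ᵥ L) := by
    intro x
    have h0 : ball (0:E) 1 = interior (closedBall (0:E) 1) :=
      (interior_closedBall (0:E) one_ne_zero).symm
    have h1 : ball (0:E) 1 ⊆ interior L := by
      rw [h0]; exact interior_mono (hBK'.trans hK'L)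
    calc ball x 1 = x +ᵥ ball (0:E) 1 := by
          rw [Metric.vadd_ball, vadd_eq_add, add_zero]
    _ ⊆ x +ᵥ interior L := by
          intro y hy
          obtain ⟨z, hz, rfl⟩ := hy
          exact ⟨z, h1 hz, rfl⟩
    _ = interior (x +ᵥ L) := (interior_vadd x L).symm
  have hev : (fun R : ℝ =>
      (∑' x : ↥X', volume (((x:E) +ᵥ L) ∩ closedBall 0 R)) /
        volume (closedBall (0:E) R))
      ≤ᶠ[atTop] (fun R : ℝ =>
      (∑' x : ↥X', volume (((x:E) +ᵥ K') ∩ closedBall 0 R)) /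
        volume (closedBall (0:E) R) + C) := by
    filter_upwards [eventually_ge_atTop ((2*(n:ℝ)+1 : ℝ))] with R hR
    have hn0 : (0:ℝ) ≤ (n:ℝ) := Nat.cast_nonneg n
    have hR1 : (1:ℝ) ≤ R := by linarith
    have hR0 : (0:ℝ) < R := by linarith
    set B := closedBall (0:E) (R + 2*(n:ℝ) + 1) with hB
    have hcb0 : volume (closedBall (0:E) R) ≠ 0 :=
      (measure_closedBall_pos volume _ hR0).ne'
    have hcbt : volume (closedBall (0:E) R) ≠ ⊤ := measure_closedBall_lt_top.ne
    have hterm : ∀ x : ↥X',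
        volume (((x:E) +ᵥ L) ∩ closedBall 0 R) ≤
        volume (((x:E) +ᵥ K') ∩ closedBall 0 R) + (w / v) * volume (ball (x:E) 1 ∩ B) := by
      intro x
      by_cases hx : ‖(x:E)‖ ≤ R + 2*(n:ℝ)
      · have hsplit : ((x:E) +ᵥ L) ∩ closedBall 0 R ⊆
            (((x:E) +ᵥ K') ∩ closedBall 0 R) ∪ ((x:E) +ᵥ (L \ K')) := by
          rintro y ⟨⟨l, hl, rfl⟩, hyR⟩
          by_cases hlK : l ∈ K'
          · exact Or.inl ⟨⟨l, hlK, rfl⟩, hyR⟩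
          · exact Or.inr ⟨l, ⟨hl, hlK⟩, rfl⟩
        have hvol2 : volume ((x:E) +ᵥ (L \ K')) = w := by rw [measure_vadd]
        have hballB : ball (x:E) 1 ⊆ B := by
          intro y hy
          rw [mem_ball] at hy
          rw [hB, mem_closedBall, dist_zero_right]
          calc ‖y‖ = ‖(y - (x:E)) + (x:E)‖ := by rw [sub_add_cancel]
          _ ≤ ‖y - (x:E)‖ + ‖(x:E)‖ := norm_add_le _ _
          _ ≤ 1 + (R + 2*(n:ℝ)) := by
              rw [dist_eq_norm] at hy
              exact add_le_add hy.le hx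
          _ = R + 2*(n:ℝ) + 1 := by ring
        have hBB : ball (x:E) 1 ∩ B = ball (x:E) 1 :=
          inter_eq_self_of_subset_left hballB
        have hvb : volume (ball (x:E) 1) = v := by
          have : ball (x:E) 1 = (x:E) +ᵥ ball (0:E) 1 := by
            rw [Metric.vadd_ball, vadd_eq_add, add_zero]
          rw [this, measure_vadd, hv]
        calc volume (((x:E) +ᵥ L) ∩ closedBall 0 R)
            ≤ volume ((((x:E) +ᵥ K') ∩ closedBall 0 R) ∪ ((x:E) +ᵥ (L \ K'))) :=
              measure_mono hsplit
        _ ≤ volume (((x:E) +ᵥ K') ∩ closedBall 0 R) + volume ((x:E) +ᵥ (L \ K')) :=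
              measure_union_le _ _
        _ = volume (((x:E) +ᵥ K') ∩ closedBall 0 R) + (w / v) * volume (ball (x:E) 1 ∩ B) := by
              rw [hvol2, hBB, hvb, ENNReal.div_mul_cancel hv0 hvt]
      · have hempty : ((x:E) +ᵥ L) ∩ closedBall 0 R = ∅ := by
          apply eq_empty_iff_forall_notMem.mpr
          rintro y ⟨⟨l, hl, rfl⟩, hyR⟩
          have h1 : ‖l‖ ≤ 2*(n:ℝ) := by
            have := hL2n hl; rwa [mem_closedBall, dist_zero_right] at this
          have h2 : ‖(x:E) + l‖ ≤ R := by
            have h3 := hyR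
            simp only [vadd_eq_add, mem_closedBall, dist_zero_right] at h3
            exact h3
          apply hx
          calc ‖(x:E)‖ = ‖((x:E) + l) - l‖ := by congr 1; abel
          _ ≤ ‖(x:E) + l‖ + ‖l‖ := norm_sub_le _ _
          _ ≤ R + 2*(n:ℝ) := add_le_add h2 h1
        rw [hempty]
        simp
    have hdisj : Pairwise (Function.onFun Disjoint
        (fun x : ↥X' => ball (x:E) 1 ∩ B)) := by
      intro x y hxy
      have hne : (x:E) ≠ (y:E) := fun h => hxy (Subtype.ext h)
      have h := hpack x.2 y.2 hne
      rw [Function.onFun]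
      apply Set.disjoint_left.mpr
      intro a hax hay
      have h1 : a ∈ interior ((x:E) +ᵥ L) := hball_sub _ hax.1
      have h2 : a ∈ interior ((y:E) +ᵥ L) := hball_sub _ hay.1
      have : a ∈ interior ((x:E) +ᵥ L) ∩ interior ((y:E) +ᵥ L) := ⟨h1, h2⟩
      rw [h] at this
      exact this
    have hcount : (∑' x : ↥X', volume (ball (x:E) 1 ∩ B)) ≤ volume B := by
      rw [← measure_iUnion hdisj
        (fun x => measurableSet_ball.inter measurableSet_closedBall)]
      exact measure_mono (iUnion_subset fun x => inter_subset_right)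
    have hsum : (∑' x : ↥X', volume (((x:E) +ᵥ L) ∩ closedBall 0 R)) ≤
        (∑' x : ↥X', volume (((x:E) +ᵥ K') ∩ closedBall 0 R)) + (w / v) * volume B := by
      calc (∑' x : ↥X', volume (((x:E) +ᵥ L) ∩ closedBall 0 R))
          ≤ ∑' x : ↥X', (volume (((x:E) +ᵥ K') ∩ closedBall 0 R) +
            (w / v) * volume (ball (x:E) 1 ∩ B)) := ENNReal.tsum_le_tsum hterm
      _ = (∑' x : ↥X', volume (((x:E) +ᵥ K') ∩ closedBall 0 R)) +
            (w / v) * ∑' x : ↥X', volume (ball (x:E) 1 ∩ B) := by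
            rw [ENNReal.tsum_add, ENNReal.tsum_mul_left]
      _ ≤ _ := add_le_add_right (mul_le_mul_right hcount _) _
    have hvolB : volume B ≤ ENNReal.ofReal ((2:ℝ)^n) * volume (closedBall (0:E) R) := by
      rw [hB, Measure.addHaar_closedBall _ _ (by positivity),
        Measure.addHaar_closedBall _ _ hR0.le, finrank_euclideanSpace_fin,
        ← mul_assoc, ← ENNReal.ofReal_mul (by positivity)]
      apply mul_le_mul_left
      apply ENNReal.ofReal_le_ofReal
      calc (R + 2*(n:ℝ) + 1)^n ≤ (2*R)^n := by
            apply pow_le_pow_left₀ (by positivity) (by linarith)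
      _ = 2^n * R^n := mul_pow 2 R n
    calc (∑' x : ↥X', volume (((x:E) +ᵥ L) ∩ closedBall 0 R)) /
          volume (closedBall (0:E) R)
        ≤ ((∑' x : ↥X', volume (((x:E) +ᵥ K') ∩ closedBall 0 R)) +
            (w / v) * volume B) / volume (closedBall (0:E) R) :=
          ENNReal.div_le_div_right hsum _
    _ ≤ ((∑' x : ↥X', volume (((x:E) +ᵥ K') ∩ closedBall 0 R)) +
            C * volume (closedBall (0:E) R)) / volume (closedBall (0:E) R) := by
          apply ENNReal.div_le_div_right
          apply add_le_add_right
          calc (w / v) * volume B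
              ≤ (w / v) * (ENNReal.ofReal ((2:ℝ)^n) * volume (closedBall (0:E) R)) :=
                mul_le_mul_right hvolB _
          _ = C * volume (closedBall (0:E) R) := by rw [hC, mul_assoc]
    _ = (∑' x : ↥X', volume (((x:E) +ᵥ K') ∩ closedBall 0 R)) /
          volume (closedBall (0:E) R) + C := by
          have hcancel : C * volume (closedBall (0:E) R) / volume (closedBall (0:E) R) = C := by
            rw [div_eq_mul_inv, mul_assoc, ← div_eq_mul_inv,
              ENNReal.div_self hcb0 hcbt, mul_one]
          rw [ENNReal.add_div, hcancel]
  refine le_trans (Filter.limsup_le_limsup hev) ?_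
  exact aux_limsup_add_const _ C

lemma aux_key (hn : 1 ≤ n) (K K' : Set E)
    (hKcpt : IsCompact K) (hKconv : Convex ℝ K)
    (hK'cpt : IsCompact K') (hK'conv : Convex ℝ K')
    (hBK : closedBall (0:E) 1 ⊆ K) (hKn : K ⊆ closedBall 0 (n:ℝ))
    (hBK' : closedBall (0:E) 1 ⊆ K') (hK'n : K' ⊆ closedBall 0 (n:ℝ))
    (hd : hausdorffDist K K' ≤ 1) :
    deltaT n K ≤ deltaT n K' +
      ENNReal.ofReal ((2^(2*n+1) * (n:ℝ)^n) * hausdorffDist K K') := by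
  set ε := hausdorffDist K K' with hε
  have hε0 : 0 ≤ ε := hausdorffDist_nonneg
  have hε1 : ε ≤ 1 := hd
  set m := 1 + ε with hm
  have hm1 : (1:ℝ) ≤ m := by linarith
  have hm0 : (0:ℝ) < m := by linarith
  have hm2 : m ≤ 2 := by linarith
  have hKne : K.Nonempty := (nonempty_closedBall.mpr zero_le_one).mono hBK
  have hK'ne : K'.Nonempty := (nonempty_closedBall.mpr zero_le_one).mono hBK'
  have hsub1 : K' ⊆ m • K := aux_subset_smul_s14 hε0 hKconv hK'cpt hKcpt hK'ne hKne hBK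
    (le_of_eq (hausdorffDist_comm ..))
  have hsub2 : K ⊆ m • K' :=
    aux_subset_smul_s14 hε0 hK'conv hKcpt hK'cpt hKne hK'ne hBK' le_rfl
  rw [deltaT]
  apply iSup_le; intro X
  apply iSup_le; intro hX
  obtain ⟨hXc, hXpack⟩ := hX
  set L := m • K with hL
  set X' := m • X with hX'
  have hX'c : X'.Countable := hXc.image _
  have hpackL : X'.Pairwise fun x y => interior (x +ᵥ L) ∩ interior (y +ᵥ L) = ∅ := by
    rintro a ⟨xa, hxa, rfl⟩ b ⟨xb, hxb, rfl⟩ hab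
    have hxab : xa ≠ xb := by rintro rfl; exact hab rfl
    have h := hXpack hxa hxb hxab
    rw [show (m • xa) +ᵥ L = m • (xa +ᵥ K) from (aux_smul_vadd m xa K).symm,
        show (m • xb) +ᵥ L = m • (xb +ᵥ K) from (aux_smul_vadd m xb K).symm,
        interior_smul₀ hm0.ne' , interior_smul₀ hm0.ne',
        ← smul_set_inter₀ hm0.ne', h, smul_set_empty]
  have hpackK' : X'.Pairwise fun x y => interior (x +ᵥ K') ∩ interior (y +ᵥ K') = ∅ := by
    intro a ha b hb hab
    have h := hpackL ha hb hab
    apply eq_empty_of_subset_empty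
    rw [← h]
    apply inter_subset_inter <;>
      exact interior_mono (fun y hy => by
        obtain ⟨k, hk, rfl⟩ := hy
        exact ⟨k, hsub1 hk, rfl⟩)
  have hL2n : L ⊆ closedBall (0:E) (2*(n:ℝ)) := by
    rintro y ⟨k, hk, rfl⟩
    have h1 : ‖k‖ ≤ (n:ℝ) := by
      have := hKn hk; rwa [mem_closedBall, dist_zero_right] at this
    rw [mem_closedBall, dist_zero_right, norm_smul, Real.norm_of_nonneg hm0.le]
    exact mul_le_mul hm2 h1 (norm_nonneg k) (by norm_num)
  have e1 : transDensity n K X = transDensity n L X' := (aux_scale hn hm1 K X).symm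
  have e2 := aux_compare hn L K' X' hX'c hpackL hsub1 hBK' hL2n
  have e3 : transDensity n K' X' ≤ deltaT n K' := by
    rw [deltaT]
    exact le_iSup_of_le X' (le_iSup_of_le ⟨hX'c, hpackK'⟩ le_rfl)
  -- bound the constant term
  set v := volume (ball (0:E) 1) with hv
  have hv0 : v ≠ 0 := (measure_ball_pos volume 0 one_pos).ne'
  have hvt : v ≠ ⊤ := measure_ball_lt_top.ne
  have hvolL : volume L = ENNReal.ofReal (m^n) * volume K := aux_vol_smul hm0.le K
  have h5 : volume K ≤ ENNReal.ofReal (m^n) * volume K' := by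
    calc volume K ≤ volume (m • K') := measure_mono hsub2
    _ = _ := aux_vol_smul hm0.le K'
  have h6 : ENNReal.ofReal ((m^n)⁻¹) * volume K ≤ volume K' := by
    calc ENNReal.ofReal ((m^n)⁻¹) * volume K
        ≤ ENNReal.ofReal ((m^n)⁻¹) * (ENNReal.ofReal (m^n) * volume K') :=
          mul_le_mul_right h5 _
    _ = volume K' := by
        rw [← mul_assoc, ← ENNReal.ofReal_mul (by positivity),
          inv_mul_cancel₀ (by positivity : (m:ℝ)^n ≠ 0), ENNReal.ofReal_one, one_mul]
  have hwle : volume (L \ K') ≤ ENNReal.ofReal (m^n - (m^n)⁻¹) * volume K := by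
    rw [measure_diff hsub1 hK'cpt.measurableSet.nullMeasurableSet hK'cpt.measure_lt_top.ne]
    calc volume L - volume K'
        ≤ ENNReal.ofReal (m^n) * volume K - ENNReal.ofReal ((m^n)⁻¹) * volume K :=
          tsub_le_tsub (le_of_eq hvolL) h6
    _ = (ENNReal.ofReal (m^n) - ENNReal.ofReal ((m^n)⁻¹)) * volume K := by
        rw [ENNReal.sub_mul (fun _ _ => hKcpt.measure_lt_top.ne)]
    _ = ENNReal.ofReal (m^n - (m^n)⁻¹) * volume K := by
        rw [ENNReal.ofReal_sub _ (by positivity)]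
  have hvolK : volume K ≤ ENNReal.ofReal ((n:ℝ)^n) * v := by
    calc volume K ≤ volume (closedBall (0:E) (n:ℝ)) := measure_mono hKn
    _ = ENNReal.ofReal ((n:ℝ)^n) * v := by
        rw [Measure.addHaar_closedBall _ _ (Nat.cast_nonneg n), finrank_euclideanSpace_fin]
  have h7 : volume (L \ K') ≤ (ENNReal.ofReal (2^(n+1) * ε) * ENNReal.ofReal ((n:ℝ)^n)) * v := by
    calc volume (L \ K') ≤ ENNReal.ofReal (m^n - (m^n)⁻¹) * volume K := hwle
    _ ≤ ENNReal.ofReal (2^(n+1) * ε) * (ENNReal.ofReal ((n:ℝ)^n) * v) :=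
        mul_le_mul' (ENNReal.ofReal_le_ofReal (aux_pow_sub n hε0 hε1)) hvolK
    _ = _ := by rw [mul_assoc]
  have h8 : volume (L \ K') / v ≤ ENNReal.ofReal (2^(n+1) * ε) * ENNReal.ofReal ((n:ℝ)^n) :=
    ENNReal.div_le_of_le_mul h7
  have e4 : (volume (L \ K') / v) * ENNReal.ofReal ((2:ℝ)^n)
      ≤ ENNReal.ofReal ((2^(2*n+1) * (n:ℝ)^n) * ε) := by
    calc (volume (L \ K') / v) * ENNReal.ofReal ((2:ℝ)^n)
        ≤ (ENNReal.ofReal (2^(n+1) * ε) * ENNReal.ofReal ((n:ℝ)^n)) * ENNReal.ofReal ((2:ℝ)^n) :=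
          mul_le_mul_left h8 _
    _ = ENNReal.ofReal ((2^(2*n+1) * (n:ℝ)^n) * ε) := by
        rw [← ENNReal.ofReal_mul (by positivity), ← ENNReal.ofReal_mul (by positivity)]
        congr 1
        ring
  calc transDensity n K X = transDensity n L X' := e1
  _ ≤ transDensity n K' X' +
      (volume (L \ K') / v) * ENNReal.ofReal ((2:ℝ)^n) := e2
  _ ≤ deltaT n K' + ENNReal.ofReal ((2^(2*n+1) * (n:ℝ)^n) * ε) := add_le_add e3 e4

end Main

/-- There exist positive constants `c` and `d`, depending only on the dimension
`n`, such that `|δ^t(K₁) − δ^t(K₂)| ≤ c · d_H(K₁,K₂)` for every pair `K₁, K₂ ∈ 𝒦^{n*}` with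
`d_H(K₁,K₂) ≤ d`.  (The absolute difference in `ℝ≥0∞` is expressed via truncated
subtraction as `max (δ^t(K₁) - δ^t(K₂)) (δ^t(K₂) - δ^t(K₁))`.) -/
theorem stmt_14 (n : ℕ) (hn : 1 ≤ n) :
    ∃ c d : ℝ, 0 < c ∧ 0 < d ∧
      ∀ K₁ K₂ : Set (EuclideanSpace ℝ (Fin n)),
        IsCompact K₁ → Convex ℝ K₁ → (interior K₁).Nonempty →
        IsCompact K₂ → Convex ℝ K₂ → (interior K₂).Nonempty →
        closedBall (0 : EuclideanSpace ℝ (Fin n)) 1 ⊆ K₁ → K₁ ⊆ closedBall 0 n →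
        closedBall (0 : EuclideanSpace ℝ (Fin n)) 1 ⊆ K₂ → K₂ ⊆ closedBall 0 n →
        hausdorffDist K₁ K₂ ≤ d →
        max (deltaT n K₁ - deltaT n K₂) (deltaT n K₂ - deltaT n K₁) ≤
          ENNReal.ofReal (c * hausdorffDist K₁ K₂) := by
  refine ⟨2^(2*n+1) * (n:ℝ)^n, 1, by positivity, one_pos, ?_⟩
  intro K₁ K₂ h1c h1v _ h2c h2v _ hB1 hn1 hB2 hn2 hdd
  apply max_le
  · rw [tsub_le_iff_right, add_comm]
    exact aux_key hn K₁ K₂ h1c h1v h2c h2v hB1 hn1 hB2 hn2 hdd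
  · rw [tsub_le_iff_right, add_comm]
    have hcomm : hausdorffDist K₂ K₁ = hausdorffDist K₁ K₂ := hausdorffDist_comm ..
    have h := aux_key hn K₂ K₁ h2c h2v h1c h1v hB2 hn2 hB1 hn1
      (hcomm.le.trans hdd)
    rwa [hcomm] at h
end

section
/- For any two centrally symmetric convex bodies C₁ and C₂ in ℝⁿ there exists an invertible linear transformation σ of ℝⁿ such that C₁ ⊆ σ(C₂) ⊆ nC₁; that is, the Banach–Mazur distance between any two n-dimensional centrally symmetric convex bodies is at most log n. -/
open Metric Set Pointwise Matrix

private lemma aux_zero_mem {E : Type*} [NormedAddCommGroup E] [NormedSpace ℝ E]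
    {C : Set E} (hconv : Convex ℝ C) (hint : (interior C).Nonempty) (hsymm : C = -C) :
    0 ∈ interior C := by
  obtain ⟨x, hx⟩ := hint
  have hx' : -x ∈ interior C := by
    have hsub : -interior C ⊆ C := by
      intro z hz
      have : -z ∈ C := interior_subset (Set.mem_neg.1 hz)
      rw [hsymm]; exact Set.mem_neg.2 (by simpa using this)
    have hopen : IsOpen (-interior C) := isOpen_interior.neg
    exact interior_maximal hsub hopen (Set.neg_mem_neg.2 hx)
  have h0 := hconv.interior hx hx' (by norm_num : (0:ℝ) ≤ 1/2)
    (by norm_num : (0:ℝ) ≤ 1/2) (by norm_num)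
  have : (1/2:ℝ) • x + (1/2:ℝ) • (-x) = 0 := by module
  rwa [this] at h0

private lemma aux_arith (n : ℕ) (hn : 1 ≤ n) (G : ℝ) (hG : (n:ℝ) < G) :
    ∃ lam : ℝ, 0 < lam ∧ lam ≤ 1/2 ∧
      1 < (1-lam)^(n-1) * ((1-lam) + lam*G) := by
  have hn1 : (1:ℝ) ≤ n := by exact_mod_cast hn
  have hGpos : 0 < G := lt_of_le_of_lt (by positivity) hG
  refine ⟨(G - n)/(2*n*G), div_pos (by linarith) (by positivity), ?_, ?_⟩
  · rw [div_le_div_iff₀ (by positivity) (by norm_num)]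
    nlinarith
  · set lam := (G - n)/(2*n*G) with hlam
    have hlp : 0 < lam := div_pos (by linarith) (by positivity)
    have hl2 : lam ≤ 1/2 := by
      rw [hlam, div_le_div_iff₀ (by positivity) (by norm_num)]; nlinarith
    have hb : 1 - (n-1:ℕ)*lam ≤ (1-lam)^(n-1) := by
      have := one_add_mul_le_pow (a := -lam) (by nlinarith) (n-1)
      simpa [sub_eq_add_neg, mul_comm] using this
    have hcast : ((n-1:ℕ):ℝ) = (n:ℝ) - 1 := by
      push_cast [Nat.cast_sub hn]; ring
    rw [hcast] at hb
    have hpos : 0 < (1-lam) + lam*G := by nlinarith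
    have hkey : 1 < (1 - ((n:ℝ)-1)*lam) * ((1-lam) + lam*G) := by
      have hlamval : lam * (2*n*G) = G - n := by
        rw [hlam]; field_simp
      nlinarith [mul_pos hlp hGpos, sq_nonneg lam, mul_pos (mul_pos hlp hlp) hGpos]
    calc (1:ℝ) < (1 - ((n:ℝ)-1)*lam) * ((1-lam) + lam*G) := hkey
      _ ≤ (1-lam)^(n-1) * ((1-lam) + lam*G) :=
          mul_le_mul_of_nonneg_right hb (le_of_lt hpos)

private lemma aux_det (n : ℕ) (hn : 1 ≤ n) (g : EuclideanSpace ℝ (Fin n) →L[ℝ] ℝ)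
    (x : EuclideanSpace ℝ (Fin n)) (a c : ℝ) (ha : a ≠ 0) :
    LinearMap.det ((a • ContinuousLinearMap.id ℝ (EuclideanSpace ℝ (Fin n))
        + c • g.smulRight x : EuclideanSpace ℝ (Fin n) →L[ℝ] EuclideanSpace ℝ (Fin n))
        : EuclideanSpace ℝ (Fin n) →ₗ[ℝ] EuclideanSpace ℝ (Fin n))
      = a^(n-1) * (a + c * g x) := by
  let E := EuclideanSpace ℝ (Fin n)
  let b : Module.Basis (Fin n) ℝ E := (EuclideanSpace.basisFun (Fin n) ℝ).toBasis
  set u : Fin n → ℝ := fun i => b.repr x i with hu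
  set v : Fin n → ℝ := fun j => g (b j) with hv
  have hdot : ∀ w : Fin n → ℝ, v ⬝ᵥ w = g (∑ j, w j • b j) := by
    intro w
    simp [dotProduct, hv, mul_comm]
  have hsum : (∑ j, u j • b j) = x := b.sum_repr x
  have hcoe : ((a • ContinuousLinearMap.id ℝ E + c • g.smulRight x : E →L[ℝ] E) : E →ₗ[ℝ] E)
      = a • LinearMap.id + c • (g : E →ₗ[ℝ] ℝ).smulRight x := by
    ext y i
    rfl
  rw [hcoe, ← LinearMap.det_toMatrix b]
  have hM : LinearMap.toMatrix b b (a • LinearMap.id + c • (g : E →ₗ[ℝ] ℝ).smulRight x)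
      = a • (1 : Matrix (Fin n) (Fin n) ℝ) + Matrix.replicateCol Unit (c • u) * Matrix.replicateRow Unit v := by
    ext i j
    simp [LinearMap.toMatrix_apply, Matrix.mul_apply, Matrix.one_apply, hu, hv,
      Matrix.replicateCol, Matrix.replicateRow, mul_comm, LinearMap.smulRight_apply, Finsupp.single_apply, eq_comm]
    ring
  rw [hM]
  have hfac : a • (1 : Matrix (Fin n) (Fin n) ℝ) + Matrix.replicateCol Unit (c • u) * Matrix.replicateRow Unit v
      = a • ((1 : Matrix (Fin n) (Fin n) ℝ) + Matrix.replicateCol Unit ((c/a) • u) * Matrix.replicateRow Unit v) := by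
    rw [smul_add]
    congr 1
    rw [← Matrix.smul_mul, ← Matrix.replicateCol_smul, smul_smul]
    congr 2
    field_simp
  rw [hfac, Matrix.det_smul, Matrix.det_one_add_replicateCol_mul_replicateRow]
  have : v ⬝ᵥ (c/a) • u = (c/a) * g x := by
    rw [hdot]
    rw [show (∑ j, ((c/a) • u) j • b j) = (c/a) • ∑ j, u j • b j by
      rw [Finset.smul_sum]; exact Finset.sum_congr rfl fun j _ => by simp [smul_smul]]
    rw [hsum]; simp
  rw [this]
  have hpow : a ^ Fintype.card (Fin n) = a ^ (n-1) * a := by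
    rw [Fintype.card_fin, ← pow_succ, Nat.sub_add_cancel hn]
  rw [hpow]
  field_simp

set_option maxHeartbeats 1000000 in
/-- For any two centrally symmetric convex bodies `C₁` and `C₂` in `ℝⁿ` there
exists an invertible linear transformation `σ` of `ℝⁿ` such that `C₁ ⊆ σ(C₂) ⊆ n·C₁`; that is,
the Banach–Mazur distance between any two `n`-dimensional centrally symmetric convex bodies is
at most `log n`. -/
theorem stmt_18 (n : ℕ) (hn : 1 ≤ n) (C₁ C₂ : Set (EuclideanSpace ℝ (Fin n)))
    (hC₁comp : IsCompact C₁) (hC₁conv : Convex ℝ C₁) (hC₁int : (interior C₁).Nonempty)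
    (hC₁symm : C₁ = -C₁)
    (hC₂comp : IsCompact C₂) (hC₂conv : Convex ℝ C₂) (hC₂int : (interior C₂).Nonempty)
    (hC₂symm : C₂ = -C₂) :
    ∃ σ : EuclideanSpace ℝ (Fin n) ≃ₗ[ℝ] EuclideanSpace ℝ (Fin n),
      C₁ ⊆ σ '' C₂ ∧ σ '' C₂ ⊆ (n : ℝ) • C₁ := by
  classical
  have h0₁ : (0 : EuclideanSpace ℝ (Fin n)) ∈ interior C₁ := aux_zero_mem hC₁conv hC₁int hC₁symm
  have h0₂ : (0 : EuclideanSpace ℝ (Fin n)) ∈ interior C₂ := aux_zero_mem hC₂conv hC₂int hC₂symm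
  have h0C₁ : (0 : EuclideanSpace ℝ (Fin n)) ∈ C₁ := interior_subset h0₁
  have h0C₂ : (0 : EuclideanSpace ℝ (Fin n)) ∈ C₂ := interior_subset h0₂
  obtain ⟨ε₁, hε₁, hball₁⟩ : ∃ ε > 0, ball (0 : EuclideanSpace ℝ (Fin n)) ε ⊆ C₁ := by
    rw [mem_interior_iff_mem_nhds] at h0₁; exact Metric.mem_nhds_iff.1 h0₁
  obtain ⟨ε₂, hε₂, hball₂⟩ : ∃ ε > 0, ball (0 : EuclideanSpace ℝ (Fin n)) ε ⊆ C₂ := by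
    rw [mem_interior_iff_mem_nhds] at h0₂; exact Metric.mem_nhds_iff.1 h0₂
  obtain ⟨R₁, hR₁⟩ := hC₁comp.isBounded.subset_closedBall 0
  obtain ⟨R₂, hR₂⟩ := hC₂comp.isBounded.subset_closedBall 0
  have hR₁0 : 0 ≤ R₁ := by simpa using hR₁ h0C₁
  have hR₂0 : 0 ≤ R₂ := by simpa using hR₂ h0C₂
  -- the set of admissible maps
  set K : Set (EuclideanSpace ℝ (Fin n) →L[ℝ] EuclideanSpace ℝ (Fin n)) :=
    {T | ∀ y ∈ C₂, T y ∈ C₁} with hKdef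
  have hKclosed : IsClosed K := by
    have : K = ⋂ y ∈ C₂, {T : EuclideanSpace ℝ (Fin n) →L[ℝ] EuclideanSpace ℝ (Fin n) | T y ∈ C₁} := by
      ext T; simp [hKdef]
    rw [this]
    exact isClosed_biInter fun y _ =>
      hC₁comp.isClosed.preimage (ContinuousLinearMap.apply ℝ (EuclideanSpace ℝ (Fin n)) y).continuous
  have hKbdd : K ⊆ closedBall 0 (2*(R₁+1)/ε₂) := by
    intro T hT
    rw [mem_closedBall_zero_iff]
    refine ContinuousLinearMap.opNorm_le_bound T (by positivity) fun w => ?_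
    rcases eq_or_ne w 0 with rfl | hw
    · simp
    · have hwn : 0 < ‖w‖ := norm_pos_iff.2 hw
      set t : ℝ := ε₂ / (2*‖w‖) with ht
      have htpos : 0 < t := by positivity
      have hmem : t • w ∈ ball (0 : EuclideanSpace ℝ (Fin n)) ε₂ := by
        rw [mem_ball_zero_iff, norm_smul, Real.norm_eq_abs, abs_of_pos htpos, ht]
        rw [div_mul_eq_mul_div, mul_comm]
        rw [div_lt_iff₀ (by positivity)]
        nlinarith
      have hTw : T (t • w) ∈ C₁ := hT _ (hball₂ hmem)
      have hTwn : ‖T (t • w)‖ ≤ R₁ := by simpa using hR₁ hTw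
      rw [T.map_smul, norm_smul, Real.norm_eq_abs, abs_of_pos htpos] at hTwn
      rw [ht] at hTwn
      rw [div_mul_eq_mul_div, div_le_iff₀ (by positivity)] at hTwn
      rw [div_mul_eq_mul_div, le_div_iff₀ hε₂]
      nlinarith [norm_nonneg (T w)]
  have hKcomp : IsCompact K :=
    (isCompact_closedBall _ _).of_isClosed_subset hKclosed hKbdd
  -- an admissible map with nonzero determinant
  set c₀ : ℝ := ε₁ / (2*(R₂+1)) with hc₀
  have hc₀pos : 0 < c₀ := by positivity
  set T₁ : EuclideanSpace ℝ (Fin n) →L[ℝ] EuclideanSpace ℝ (Fin n) :=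
    c₀ • ContinuousLinearMap.id ℝ (EuclideanSpace ℝ (Fin n)) with hT₁
  have hT₁K : T₁ ∈ K := by
    intro y hy
    have hyn : ‖y‖ ≤ R₂ := by simpa using hR₂ hy
    apply hball₁
    rw [mem_ball_zero_iff]
    have : T₁ y = c₀ • y := rfl
    rw [this, norm_smul, Real.norm_eq_abs, abs_of_pos hc₀pos, hc₀]
    rw [div_mul_eq_mul_div, div_lt_iff₀ (by positivity)]
    nlinarith
  have hdetT₁ : LinearMap.det (T₁ : EuclideanSpace ℝ (Fin n) →ₗ[ℝ] EuclideanSpace ℝ (Fin n)) = c₀^n := by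
    have : (T₁ : EuclideanSpace ℝ (Fin n) →ₗ[ℝ] EuclideanSpace ℝ (Fin n))
        = c₀ • LinearMap.id := by ext y i; rfl
    rw [this, LinearMap.det_smul, finrank_euclideanSpace_fin, LinearMap.det_id, mul_one]
  -- maximize |det| over K
  set φ : (EuclideanSpace ℝ (Fin n) →L[ℝ] EuclideanSpace ℝ (Fin n)) → ℝ :=
    fun T => |LinearMap.det (T : EuclideanSpace ℝ (Fin n) →ₗ[ℝ] EuclideanSpace ℝ (Fin n))| with hφ
  have hφcont : Continuous φ := ContinuousLinearMap.continuous_det.abs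
  obtain ⟨T₀, hT₀K, hT₀max⟩ := hKcomp.exists_isMaxOn ⟨T₁, hT₁K⟩ hφcont.continuousOn
  have hφT₀pos : 0 < φ T₀ := by
    have h1 : φ T₁ ≤ φ T₀ := hT₀max hT₁K
    have h2 : 0 < φ T₁ := by rw [hφ]; simp only; rw [hdetT₁]; positivity
    linarith
  have hdet₀ : LinearMap.det (T₀ : EuclideanSpace ℝ (Fin n) →ₗ[ℝ] EuclideanSpace ℝ (Fin n)) ≠ 0 := by
    intro h
    rw [hφ] at hφT₀pos
    simp only [h, abs_zero] at hφT₀pos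
    exact lt_irrefl 0 hφT₀pos
  set e : EuclideanSpace ℝ (Fin n) ≃ₗ[ℝ] EuclideanSpace ℝ (Fin n) :=
    LinearMap.equivOfDetNeZero _ hdet₀ with he
  have hecoe : ∀ y, e y = T₀ y := fun y => rfl
  set D : Set (EuclideanSpace ℝ (Fin n)) := ⇑T₀ '' C₂ with hDdef
  have hDsubC₁ : D ⊆ C₁ := by rintro _ ⟨y, hy, rfl⟩; exact hT₀K y hy
  have hDcomp : IsCompact D := hC₂comp.image T₀.continuous
  have hDconv : Convex ℝ D := hC₂conv.is_linear_image ⟨T₀.map_add, T₀.map_smul⟩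
  have hDsymm : ∀ d ∈ D, -d ∈ D := by
    rintro _ ⟨y, hy, rfl⟩
    have hy' : -y ∈ C₂ := by rw [hC₂symm]; exact Set.neg_mem_neg.2 hy
    exact ⟨-y, hy', map_neg T₀ y⟩
  have h0D : (0 : EuclideanSpace ℝ (Fin n)) ∈ D := ⟨0, h0C₂, map_zero T₀⟩
  -- main claim
  have hmain : C₁ ⊆ (n:ℝ) • D := by
    intro x hxC₁
    by_contra hxD
    have hnDcomp : IsCompact ((n:ℝ) • D) := by
      rw [← Set.image_smul]; exact hDcomp.image (continuous_const_smul _)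
    have hnDconv : Convex ℝ ((n:ℝ) • D) := hDconv.smul _
    obtain ⟨f, u, hfu, hux⟩ := geometric_hahn_banach_closed_point hnDconv hnDcomp.isClosed hxD
    have hu0 : 0 < u := by
      have h1 := hfu _ (Set.smul_mem_smul_set h0D)
      simpa using h1
    obtain ⟨d₀, hd₀D, hd₀max⟩ := hDcomp.exists_isMaxOn ⟨0, h0D⟩ f.continuous.continuousOn
    set m : ℝ := f d₀ with hm
    have hfd : ∀ d ∈ D, f d ≤ m := hd₀max
    have hmpos : 0 < m := by
      have hyex : ∃ y, f (T₀ y) ≠ 0 := by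
        by_contra hcon
        push_neg at hcon
        have hfx : f x = 0 := by
          have h1 : T₀ (e.symm x) = x := by rw [← hecoe]; exact e.apply_symm_apply x
          rw [← h1]; exact hcon _
        linarith
      obtain ⟨y, hy⟩ := hyex
      have hy0 : y ≠ 0 := by intro h; rw [h, map_zero, map_zero] at hy; exact hy rfl
      have hyn : 0 < ‖y‖ := norm_pos_iff.2 hy0
      set t : ℝ := ε₂ / (2*‖y‖) with htdef
      have htpos : 0 < t := by positivity
      have hmem : t • y ∈ C₂ := by
        apply hball₂
        rw [mem_ball_zero_iff, norm_smul, Real.norm_eq_abs, abs_of_pos htpos, htdef]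
        rw [div_mul_eq_mul_div, div_lt_iff₀ (by positivity)]
        nlinarith
      have hmem' : -(t • y) ∈ C₂ := by
        rw [hC₂symm]; exact Set.neg_mem_neg.2 hmem
      have h1 : t * f (T₀ y) ≤ m := by
        have := hfd _ ⟨t • y, hmem, rfl⟩
        rwa [T₀.map_smul, f.map_smul, smul_eq_mul] at this
      have h2 : -(t * f (T₀ y)) ≤ m := by
        have h3 := hfd _ ⟨-(t • y), hmem', rfl⟩
        rw [T₀.map_neg, f.map_neg, T₀.map_smul, f.map_smul, smul_eq_mul] at h3
        linarith
      have habs : 0 < t * |f (T₀ y)| := by positivity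
      rcases abs_cases (f (T₀ y)) with ⟨hc, _⟩ | ⟨hc, _⟩
      · rw [hc] at habs; linarith
      · rw [hc] at habs; linarith
    have hnm : (n:ℝ) * m < f x := by
      have h1 : f ((n:ℝ) • d₀) < u := hfu _ (Set.smul_mem_smul_set hd₀D)
      rw [f.map_smul, smul_eq_mul] at h1
      linarith
    set G : ℝ := f x / m with hG
    have hGn : (n:ℝ) < G := (lt_div_iff₀ hmpos).2 (by linarith)
    set g : EuclideanSpace ℝ (Fin n) →L[ℝ] ℝ := m⁻¹ • f with hg
    have hgapp : ∀ z, g z = m⁻¹ * f z := fun z => rfl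
    have hgx : g x = G := by rw [hgapp x, hG, inv_mul_eq_div]
    have hgd : ∀ d ∈ D, |g d| ≤ 1 := by
      intro d hd
      have h1 : f d ≤ m := hfd d hd
      have h2 : -f d ≤ m := by
        have h3 := hfd _ (hDsymm d hd)
        rw [f.map_neg] at h3; linarith
      have habsf : |f d| ≤ m := abs_le.2 ⟨by linarith, h1⟩
      rw [hgapp d, abs_mul, abs_inv, abs_of_pos hmpos, inv_mul_eq_div, div_le_one hmpos]
      exact habsf
    obtain ⟨lam, hlam0, hlam2, hlamkey⟩ := aux_arith n hn G hGn
    set S : EuclideanSpace ℝ (Fin n) →L[ℝ] EuclideanSpace ℝ (Fin n) :=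
      (1-lam) • ContinuousLinearMap.id ℝ (EuclideanSpace ℝ (Fin n)) + lam • g.smulRight x with hS
    have hSTK : S.comp T₀ ∈ K := by
      intro y hy
      have hd : T₀ y ∈ D := ⟨y, hy, rfl⟩
      have hdC : T₀ y ∈ C₁ := hDsubC₁ hd
      show S (T₀ y) ∈ C₁
      have hxm : -x ∈ C₁ := by rw [hC₁symm]; exact Set.neg_mem_neg.2 hxC₁
      have habs := hgd _ hd
      rw [abs_le] at habs
      have hw : (g (T₀ y)) • x ∈ C₁ := by
        have hcomb := hC₁conv hxC₁ hxm
          (a := (1 + g (T₀ y))/2) (b := (1 - g (T₀ y))/2)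
          (by linarith [habs.1]) (by linarith [habs.2]) (by ring)
        have heq : ((1 + g (T₀ y))/2) • x + ((1 - g (T₀ y))/2) • (-x) = (g (T₀ y)) • x := by
          module
        rwa [heq] at hcomb
      have hfin := hC₁conv hdC hw (a := 1-lam) (b := lam)
        (by linarith) (le_of_lt hlam0) (by ring)
      have heq2 : S (T₀ y) = (1-lam) • (T₀ y) + lam • ((g (T₀ y)) • x) := by
        rw [hS]; rfl
      rwa [heq2]
    have hdetS : LinearMap.det (S : EuclideanSpace ℝ (Fin n) →ₗ[ℝ] EuclideanSpace ℝ (Fin n))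
        = (1-lam)^(n-1) * ((1-lam) + lam * G) := by
      rw [hS, aux_det n hn g x (1-lam) lam (by linarith), hgx]
    have hcomp : |LinearMap.det ((S.comp T₀ : EuclideanSpace ℝ (Fin n) →L[ℝ] EuclideanSpace ℝ (Fin n)) : EuclideanSpace ℝ (Fin n) →ₗ[ℝ] EuclideanSpace ℝ (Fin n))|
        ≤ |LinearMap.det (T₀ : EuclideanSpace ℝ (Fin n) →ₗ[ℝ] EuclideanSpace ℝ (Fin n))| := hT₀max hSTK
    rw [ContinuousLinearMap.toLinearMap_comp, LinearMap.det_comp, abs_mul, hdetS] at hcomp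
    have habs1 : |(1-lam)^(n-1) * ((1-lam) + lam * G)| = (1-lam)^(n-1) * ((1-lam) + lam * G) := by
      apply abs_of_pos; linarith
    rw [habs1] at hcomp
    have hT0pos : 0 < |LinearMap.det (T₀ : EuclideanSpace ℝ (Fin n) →ₗ[ℝ] EuclideanSpace ℝ (Fin n))| := hφT₀pos
    nlinarith
  -- assemble σ
  have hn0 : (n:ℝ) ≠ 0 := by positivity
  set σ : EuclideanSpace ℝ (Fin n) ≃ₗ[ℝ] EuclideanSpace ℝ (Fin n) :=
    e.trans (LinearEquiv.smulOfNeZero ℝ _ (n:ℝ) hn0) with hσ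
  have hσapp : ∀ y, σ y = (n:ℝ) • T₀ y := fun y => rfl
  have himg : ⇑σ '' C₂ = (n:ℝ) • D := by
    ext z
    constructor
    · rintro ⟨y, hy, rfl⟩
      rw [hσapp]
      exact Set.smul_mem_smul_set ⟨y, hy, rfl⟩
    · rintro ⟨d, ⟨y, hy, rfl⟩, rfl⟩
      exact ⟨y, hy, (hσapp y).symm⟩
  exact ⟨σ, by rw [himg]; exact hmain, by rw [himg]; exact Set.smul_set_mono hDsubC₁⟩
end

section
/- For any two convex bodies K₁ and K₂ in ℝⁿ there exist an invertible affine transformation σ of ℝⁿ and a point x ∈ ℝⁿ such that K₁ ⊆ σ(K₂) ⊆ n²K₁ + x; that is, the Banach–Mazur distance between any two n-dimensional convex bodies is at most 2·log n. -/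
open Metric Set Pointwise

noncomputable def rowMat (n : ℕ) (v : Fin (n+1) → EuclideanSpace ℝ (Fin n)) :
    Matrix (Fin (n+1)) (Fin (n+1)) ℝ :=
  Matrix.of fun i => Fin.cons 1 (fun j => v i j)

lemma euclid_sum_apply {n : ℕ} {ι : Type*} (s : Finset ι)
    (f : ι → EuclideanSpace ℝ (Fin n)) (m : Fin n) :
    (∑ i ∈ s, f i) m = ∑ i ∈ s, f i m := by
  classical
  induction s using Finset.induction_on with
  | empty => simp [PiLp.zero_apply]
  | insert _ _ h ih => rw [Finset.sum_insert h, Finset.sum_insert h, PiLp.add_apply, ih]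

lemma exists_good_basis (n : ℕ) (K : Set (EuclideanSpace ℝ (Fin n)))
    (hcomp : IsCompact K) (hint : (interior K).Nonempty) :
    ∃ b : AffineBasis (Fin (n+1)) ℝ (EuclideanSpace ℝ (Fin n)),
      (∀ i, b i ∈ K) ∧ ∀ y ∈ K, ∀ i, b.coord i y ≤ 1 := by
  classical
  set D : (Fin (n+1) → EuclideanSpace ℝ (Fin n)) → ℝ := fun v => (rowMat n v).det with hD
  have hcont : Continuous D := by
    apply Continuous.matrix_det
    apply continuous_matrix
    intro i j
    refine Fin.cases ?_ ?_ j
    · simpa [rowMat] using continuous_const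
    · intro m
      simpa [rowMat, Function.comp_def] using
        ((EuclideanSpace.proj m).continuous.comp (continuous_apply i))
  set C : Set (Fin (n+1) → EuclideanSpace ℝ (Fin n)) := Set.univ.pi fun _ => K with hC
  have hCcomp : IsCompact C := isCompact_univ_pi fun _ => hcomp
  obtain ⟨x₀, hx₀⟩ := hint
  have hx₀K : x₀ ∈ K := interior_subset hx₀
  have hCne : C.Nonempty := ⟨fun _ => x₀, fun i _ => hx₀K⟩
  obtain ⟨v, hvC, hvmax⟩ := hCcomp.exists_isMaxOn hCne (continuous_abs.comp hcont).continuousOn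
  have hvK : ∀ i, v i ∈ K := fun i => hvC i (Set.mem_univ i)
  -- a family with nonzero determinant
  obtain ⟨ε, hε, hball⟩ := Metric.isOpen_iff.1 isOpen_interior x₀ hx₀
  set p : Fin (n+1) → EuclideanSpace ℝ (Fin n) :=
    Fin.cons x₀ (fun j => x₀ + (ε/2) • EuclideanSpace.single j (1:ℝ)) with hp
  have hpK : ∀ i, p i ∈ K := by
    intro i
    refine Fin.cases ?_ ?_ i
    · simpa [hp] using hx₀K
    · intro j
      apply interior_subset
      apply hball
      simp only [hp, Fin.cons_succ, mem_ball, dist_self_add_left]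
      rw [norm_smul, EuclideanSpace.norm_single]
      simp only [Real.norm_eq_abs, norm_one, mul_one]
      rw [abs_of_pos (by positivity)]
      linarith
  have hpD : D p ≠ 0 := by
    have hrows : LinearIndependent ℝ (fun i => rowMat n p i) := by
      rw [Fintype.linearIndependent_iff]
      intro g hg
      have h0 : ∑ i, g i = 0 := by
        have := congrFun hg 0
        simpa [rowMat, Finset.sum_apply] using this
      have hsucc : ∀ m : Fin n, g m.succ = 0 := by
        intro m
        have h1 := congrFun hg m.succ
        simp only [Finset.sum_apply, Pi.smul_apply, Pi.zero_apply, rowMat, Matrix.of_apply,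
          Fin.cons_succ, smul_eq_mul] at h1
        rw [Fin.sum_univ_succ] at h1
        simp only [hp, Fin.cons_zero, Fin.cons_succ] at h1
        have h2 : ∀ j : Fin n,
            g j.succ * (x₀ + (ε/2) • EuclideanSpace.single j (1:ℝ)) m
              = g j.succ * x₀ m + g j.succ * ((ε/2) * if m = j then 1 else 0) := by
          intro j
          have : (x₀ + (ε/2) • EuclideanSpace.single j (1:ℝ)) m
              = x₀ m + (ε/2) * (if m = j then 1 else 0) := by
            simp [EuclideanSpace.single_apply]
          rw [this]; ring
        rw [Finset.sum_congr rfl (fun j _ => h2 j), Finset.sum_add_distrib] at h1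
        have h3 : ∑ j : Fin n, g j.succ * ((ε/2) * if m = j then 1 else 0)
            = g m.succ * (ε/2) := by
          rw [Finset.sum_eq_single m]
          · simp
          · intro j _ hj; simp [Ne.symm hj]
          · simp
        rw [h3] at h1
        have h4 : ∑ j : Fin n, g j.succ * x₀ m = (∑ j : Fin n, g j.succ) * x₀ m := by
          rw [Finset.sum_mul]
        rw [h4] at h1
        have h5 : g 0 + ∑ j : Fin n, g j.succ = 0 := by
          rw [← h0, Fin.sum_univ_succ]
        have h6 : (∑ j : Fin n, g j.succ) * x₀ m = (-(g 0)) * x₀ m := by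
          rw [show (∑ j : Fin n, g j.succ) = -(g 0) by linarith]
        nlinarith [h1, h6]
      intro i
      refine Fin.cases ?_ hsucc i
      have := h0
      rw [Fin.sum_univ_succ] at this
      simp only [hsucc, Finset.sum_const_zero, add_zero] at this
      exact this
    intro h
    have hu : IsUnit (rowMat n p) := Matrix.linearIndependent_rows_iff_isUnit.1 hrows
    exact isUnit_iff_ne_zero.1 ((Matrix.isUnit_iff_isUnit_det _).1 hu) h
  have hpC : p ∈ C := fun i _ => hpK i
  have habsle : |D p| ≤ |D v| := hvmax hpC
  have hvD : D v ≠ 0 := by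
    intro h
    rw [h, abs_zero] at habsle
    exact hpD (abs_eq_zero.1 (le_antisymm habsle (abs_nonneg _)))
  have hrowsv : LinearIndependent ℝ (fun i => rowMat n v i) :=
    Matrix.linearIndependent_rows_iff_isUnit.2
      ((Matrix.isUnit_iff_isUnit_det _).2 (isUnit_iff_ne_zero.2 hvD))
  have hind : AffineIndependent ℝ v := by
    rw [affineIndependent_iff]
    intro s w hsum hcomb e he
    have key : ∀ i, (fun i => if i ∈ s then w i else 0) i = 0 := by
      apply Fintype.linearIndependent_iff.1 hrowsv
      have heq : ∑ i, (if i ∈ s then w i else 0) • rowMat n v i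
          = ∑ i ∈ s, w i • rowMat n v i := by
        simp only [ite_smul, zero_smul]
        rw [Finset.sum_ite_mem, Finset.univ_inter]
      rw [heq]
      funext k
      refine Fin.cases ?_ ?_ k
      · simpa [rowMat, Finset.sum_apply] using hsum
      · intro m
        have h1 : (∑ i ∈ s, w i • v i) m = 0 := by rw [hcomb]; rfl
        rw [euclid_sum_apply] at h1
        simp only [Finset.sum_apply, Pi.smul_apply, Pi.zero_apply, rowMat, Matrix.of_apply,
          Fin.cons_succ, smul_eq_mul]
        simpa [PiLp.smul_apply, smul_eq_mul] using h1
    have := key e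
    simpa [he] using this
  have htot : affineSpan ℝ (Set.range v) = ⊤ := by
    rw [hind.affineSpan_eq_top_iff_card_eq_finrank_add_one]
    simp [finrank_euclideanSpace_fin]
  set b : AffineBasis (Fin (n+1)) ℝ (EuclideanSpace ℝ (Fin n)) := ⟨v, hind, htot⟩ with hb
  have hbv : ∀ i, b i = v i := fun i => rfl
  refine ⟨b, fun i => hvK i, ?_⟩
  intro y hy i
  set c : Fin (n+1) → ℝ := fun j => b.coord j y with hc
  have hcsum : ∑ j, c j = 1 := b.sum_coord_apply_eq_one y
  have hcy : ∑ j, c j • v j = y := b.linear_combination_coord_eq_self y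
  -- the updated family
  have hupC : Function.update v i y ∈ C := by
    intro j _
    rcases eq_or_ne j i with rfl | hne
    · simpa using hy
    · simpa [Function.update_of_ne hne] using hvK j
  have hrow : (Fin.cons 1 (fun k => y k) : Fin (n+1) → ℝ)
      = ∑ j, c j • rowMat n v j := by
    funext k
    refine Fin.cases ?_ ?_ k
    · simpa [rowMat, Finset.sum_apply] using hcsum.symm
    · intro m
      have h1 : (∑ j, c j • v j) m = y m := by rw [hcy]
      rw [euclid_sum_apply] at h1
      simp only [Fin.cons_succ, Finset.sum_apply, Pi.smul_apply, rowMat, Matrix.of_apply,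
        smul_eq_mul]
      rw [← h1]
      simp [PiLp.smul_apply, smul_eq_mul]
  have hupdate : rowMat n (Function.update v i y)
      = (rowMat n v).updateRow i (Fin.cons 1 (fun k => y k)) := by
    ext i' j'
    rcases eq_or_ne i' i with rfl | hne
    · simp [rowMat, Matrix.updateRow_self]
    · simp [rowMat, Matrix.updateRow_ne hne, Function.update_of_ne hne]
  have hDup : D (Function.update v i y) = c i * D v := by
    rw [hD]
    simp only
    rw [hupdate, hrow, Matrix.det_updateRow_sum]
    rfl
  have hle : |D (Function.update v i y)| ≤ |D v| := hvmax hupC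
  rw [hDup, abs_mul] at hle
  have hpos : 0 < |D v| := abs_pos.2 hvD
  have : |c i| ≤ 1 := by
    by_contra h
    push_neg at h
    nlinarith
  calc c i ≤ |c i| := le_abs_self _
    _ ≤ 1 := this

/-- For any two convex bodies `K₁` and `K₂` in `ℝⁿ` there exist an invertible
affine transformation `σ` of `ℝⁿ` and a point `x ∈ ℝⁿ` such that `K₁ ⊆ σ(K₂) ⊆ n²·K₁ + x`;
that is, the Banach–Mazur distance between any two `n`-dimensional convex bodies is at most
`2·log n`. -/
theorem stmt_19 (n : ℕ) (hn : 1 ≤ n) (K₁ K₂ : Set (EuclideanSpace ℝ (Fin n)))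
    (hK₁comp : IsCompact K₁) (hK₁conv : Convex ℝ K₁) (hK₁int : (interior K₁).Nonempty)
    (hK₂comp : IsCompact K₂) (hK₂conv : Convex ℝ K₂) (hK₂int : (interior K₂).Nonempty) :
    ∃ (σ : EuclideanSpace ℝ (Fin n) ≃ᵃ[ℝ] EuclideanSpace ℝ (Fin n))
      (x : EuclideanSpace ℝ (Fin n)),
      K₁ ⊆ σ '' K₂ ∧ σ '' K₂ ⊆ x +ᵥ ((n : ℝ) ^ 2) • K₁ := by
  classical
  obtain ⟨b₁, hb₁K, hb₁c⟩ := exists_good_basis n K₁ hK₁comp hK₁int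
  obtain ⟨b₂, hb₂K, hb₂c⟩ := exists_good_basis n K₂ hK₂comp hK₂int
  have hnpos : (0:ℝ) < n := by exact_mod_cast hn
  have hn0 : (n:ℝ) ≠ 0 := ne_of_gt hnpos
  have hnneg : (-(n:ℝ)) ≠ 0 := neg_ne_zero.2 hn0
  set s : EuclideanSpace ℝ (Fin n) := ∑ j, b₁ j with hs
  set w : Fin (n+1) → EuclideanSpace ℝ (Fin n) := fun i => s - (n:ℝ) • b₁ i with hw
  set Bw := (b₁.basisOf 0).unitsSMul (fun _ => Units.mk0 (-(n:ℝ)) hnneg) with hBw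
  set L := (b₂.basisOf 0).equiv Bw (Equiv.refl _) with hL
  set σ : EuclideanSpace ℝ (Fin n) ≃ᵃ[ℝ] EuclideanSpace ℝ (Fin n) :=
    ((AffineEquiv.constVAdd ℝ (EuclideanSpace ℝ (Fin n)) (b₂ 0)).symm.trans
      L.toAffineEquiv).trans
        (AffineEquiv.constVAdd ℝ (EuclideanSpace ℝ (Fin n)) (w 0)) with hσdef
  have hσform : ∀ z, σ z = w 0 + L (z - b₂ 0) := by
    intro z
    simp only [hσdef, AffineEquiv.trans_apply]
    simp [vadd_eq_add, sub_eq_neg_add]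
  have hσ : ∀ j, σ (b₂ j) = w j := by
    intro j
    rcases eq_or_ne j 0 with rfl | hj
    · rw [hσform]
      simp
    · rw [hσform]
      have hb : b₂.basisOf 0 ⟨j, hj⟩ = b₂ j - b₂ 0 := by
        simp [AffineBasis.basisOf_apply, vsub_eq_sub]
      have h2 : L (b₂ j - b₂ 0) = (-(n:ℝ)) • (b₁ j - b₁ 0) := by
        rw [← hb, hL, Module.Basis.equiv_apply, Equiv.refl_apply, hBw, Module.Basis.unitsSMul_apply]
        simp [AffineBasis.basisOf_apply, vsub_eq_sub, Units.smul_def]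
      rw [h2, hw]
      simp only [hw]
      module
  have key : ∀ d : Fin (n+1) → ℝ, ∑ i, d i = 1 →
      σ (∑ i, d i • b₂ i) = ∑ i, d i • w i := by
    intro d hd
    have h1 : (∑ i, d i • b₂ i)
        = Finset.univ.affineCombination ℝ (fun i => b₂ i) d :=
      (Finset.affineCombination_eq_linear_combination _ _ _ hd).symm
    have h2 := Finset.map_affineCombination (s := Finset.univ)
      (fun i => b₂ i) d hd σ.toAffineMap
    have h3 : (σ.toAffineMap ∘ fun i => b₂ i) = w := by
      funext j
      simpa using hσ j
    rw [h1]
    rw [show σ (Finset.univ.affineCombination ℝ (fun i => b₂ i) d)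
        = σ.toAffineMap (Finset.univ.affineCombination ℝ (fun i => b₂ i) d) from rfl]
    rw [h2, h3, Finset.affineCombination_eq_linear_combination _ _ _ hd]
  refine ⟨σ, ((1:ℝ) - n) • s, ?_, ?_⟩
  · -- K₁ ⊆ σ '' K₂
    intro y hy
    set c : Fin (n+1) → ℝ := fun j => b₁.coord j y with hc
    have hcsum : ∑ j, c j = 1 := b₁.sum_coord_apply_eq_one y
    have hcy : ∑ j, c j • b₁ j = y := b₁.linear_combination_coord_eq_self y
    set t : Fin (n+1) → ℝ := fun j => (1 - c j) / n with ht
    have ht0 : ∀ j, 0 ≤ t j := fun j =>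
      div_nonneg (by linarith [hb₁c y hy j]) (le_of_lt hnpos)
    have htn : ∀ j, (n:ℝ) * t j = 1 - c j := fun j => by
      rw [ht]; field_simp
    have htsum : ∑ j, t j = 1 := by
      have : (n:ℝ) * ∑ j, t j = (n:ℝ) * 1 := by
        rw [Finset.mul_sum]
        simp only [htn]
        rw [Finset.sum_sub_distrib, hcsum]
        simp [Finset.card_univ, mul_one]
      exact mul_left_cancel₀ hn0 this
    set z : EuclideanSpace ℝ (Fin n) := ∑ j, t j • b₂ j with hz
    have hzK : z ∈ K₂ := hK₂conv.sum_mem (fun j _ => ht0 j) htsum (fun j _ => hb₂K j)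
    refine ⟨z, hzK, ?_⟩
    rw [hz, key t htsum]
    have : ∑ j, t j • w j = (∑ j, t j) • s - ∑ j, ((n:ℝ) * t j) • b₁ j := by
      rw [Finset.sum_smul, ← Finset.sum_sub_distrib]
      congr 1
      funext j
      rw [hw]
      simp only
      module
    rw [this, htsum, one_smul]
    have h4 : ∑ j, ((n:ℝ) * t j) • b₁ j = s - ∑ j, c j • b₁ j := by
      simp only [htn, sub_smul, one_smul]
      rw [Finset.sum_sub_distrib, hs]
    rw [h4, hcy]
    abel
  · -- σ '' K₂ ⊆ x +ᵥ n² • K₁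
    rintro - ⟨y, hy, rfl⟩
    set d : Fin (n+1) → ℝ := fun j => b₂.coord j y with hd
    have hdsum : ∑ j, d j = 1 := b₂.sum_coord_apply_eq_one y
    have hdy : ∑ j, d j • b₂ j = y := b₂.linear_combination_coord_eq_self y
    set u : Fin (n+1) → ℝ := fun j => (1 - d j) / n with hu
    have hu0 : ∀ j, 0 ≤ u j := fun j =>
      div_nonneg (by linarith [hb₂c y hy j]) (le_of_lt hnpos)
    have hun : ∀ j, (n:ℝ) * u j = 1 - d j := fun j => by
      rw [hu]; field_simp
    have husum : ∑ j, u j = 1 := by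
      have : (n:ℝ) * ∑ j, u j = (n:ℝ) * 1 := by
        rw [Finset.mul_sum]
        simp only [hun]
        rw [Finset.sum_sub_distrib, hdsum]
        simp [Finset.card_univ, mul_one]
      exact mul_left_cancel₀ hn0 this
    set k : EuclideanSpace ℝ (Fin n) := ∑ j, u j • b₁ j with hk
    have hkK : k ∈ K₁ := hK₁conv.sum_mem (fun j _ => hu0 j) husum (fun j _ => hb₁K j)
    refine ⟨((n:ℝ)^2) • k, Set.smul_mem_smul_set hkK, ?_⟩
    have hσy : σ y = s - (n:ℝ) • (∑ j, d j • b₁ j) := by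
      rw [← hdy, key d hdsum]
      have : ∑ j, d j • w j = (∑ j, d j) • s - ∑ j, d j • ((n:ℝ) • b₁ j) := by
        rw [Finset.sum_smul, ← Finset.sum_sub_distrib]
        congr 1
        funext j
        rw [hw]
        simp only
        module
      rw [this, hdsum, one_smul, Finset.smul_sum]
      congr 1
      exact Finset.sum_congr rfl fun j _ => by module
    have hsum2 : ∑ j, d j • b₁ j = s - (n:ℝ) • k := by
      have : ∀ j, d j • b₁ j = b₁ j - ((n:ℝ) * u j) • b₁ j := by
        intro j
        rw [hun j]
        module
      rw [Finset.sum_congr rfl (fun j _ => this j), Finset.sum_sub_distrib, ← hs, hk,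
        Finset.smul_sum]
      congr 1
      exact Finset.sum_congr rfl fun j _ => by module
    rw [hσy, hsum2]
    show ((1:ℝ) - n) • s + ((n:ℝ)^2) • k = _
    module
end
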